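/- Let m | n be positive integers with m < n. Then every ℂ*-equivariant algebraic automorphism of ℂ² \ {0} for the weight-(m,n) action has the form (x,y) ↦ (λ₁x, λ₂y + a x^{n/m}) for some λ₁, λ₂ ∈ ℂ* and a ∈ ℂ, and the group of such automorphisms is isomorphic to (ℂ* × ℂ*) ⋉ ℂ, where (λ₁,λ₂) acts on a ∈ ℂ by a ↦ λ₁^{-n/m} λ₂ a. -/
import Mathlib


/-- The punctured plane `ℂ² \ {0}`. -/
abbrev PuncturedPlane : Type := {v : ℂ × ℂ // v ≠ 0}

set_option maxRecDepth 10000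


open MvPolynomial in
lemma eval_weight_aux (m n w : ℕ) (P : MvPolynomial (Fin 2) ℂ) (x y : ℂ)
    (h : ∀ t : ℂ, t ≠ 0 → MvPolynomial.eval ![t ^ m * x, t ^ n * y] P
        = t ^ w * MvPolynomial.eval ![x, y] P) :
    MvPolynomial.eval ![x, y] P =
      ∑ d ∈ P.support, if m * d 0 + n * d 1 = w
        then MvPolynomial.coeff d P * x ^ d 0 * y ^ d 1 else 0 := by
  have heval : ∀ t : ℂ, Polynomial.eval t
      (MvPolynomial.aeval ![Polynomial.C x * Polynomial.X ^ m,
        Polynomial.C y * Polynomial.X ^ n] P)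
      = MvPolynomial.eval ![t ^ m * x, t ^ n * y] P := by
    intro t
    rw [MvPolynomial.aeval_def, Polynomial.algebraMap_eq, ← Polynomial.coe_evalRingHom,
      MvPolynomial.eval₂_comp_left]
    have h1 : (Polynomial.evalRingHom t).comp Polynomial.C = RingHom.id ℂ := by
      ext c; simp
    have h2 : (Polynomial.evalRingHom t) ∘
        ![Polynomial.C x * Polynomial.X ^ m, Polynomial.C y * Polynomial.X ^ n]
        = ![t ^ m * x, t ^ n * y] := by
      funext i
      fin_cases i
      · show Polynomial.eval t (Polynomial.C x * Polynomial.X ^ m) = t ^ m * x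
        rw [Polynomial.eval_mul, Polynomial.eval_pow, Polynomial.eval_C, Polynomial.eval_X,
          mul_comm]
      · show Polynomial.eval t (Polynomial.C y * Polynomial.X ^ n) = t ^ n * y
        rw [Polynomial.eval_mul, Polynomial.eval_pow, Polynomial.eval_C, Polynomial.eval_X,
          mul_comm]
    rw [h1, h2]
    rfl
  have hFG : MvPolynomial.aeval ![Polynomial.C x * Polynomial.X ^ m,
        Polynomial.C y * Polynomial.X ^ n] P
      = Polynomial.C (MvPolynomial.eval ![x, y] P) * Polynomial.X ^ w := by
    apply Polynomial.eq_of_infinite_eval_eq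
    apply Set.Infinite.mono (s := {(0:ℂ)}ᶜ)
    · intro t ht
      simp only [Set.mem_compl_iff, Set.mem_singleton_iff] at ht
      simp only [Set.mem_setOf_eq, heval, Polynomial.eval_mul, Polynomial.eval_C,
        Polynomial.eval_pow, Polynomial.eval_X]
      rw [h t ht]; ring
    · exact (Set.finite_singleton 0).infinite_compl
  have hFsum : MvPolynomial.aeval ![Polynomial.C x * Polynomial.X ^ m,
        Polynomial.C y * Polynomial.X ^ n] P
      = ∑ d ∈ P.support,
      Polynomial.C (MvPolynomial.coeff d P * x ^ d 0 * y ^ d 1)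
        * Polynomial.X ^ (m * d 0 + n * d 1) := by
    conv_lhs => rw [P.as_sum]
    rw [map_sum]
    refine Finset.sum_congr rfl fun d _ => ?_
    rw [MvPolynomial.aeval_monomial, Finsupp.prod_pow, Fin.prod_univ_two]
    simp only [Matrix.cons_val_zero, Matrix.cons_val_one, Matrix.head_cons,
      Polynomial.algebraMap_eq]
    rw [mul_pow, mul_pow, ← Polynomial.C_pow, ← Polynomial.C_pow, ← pow_mul, ← pow_mul,
      Polynomial.C_mul, Polynomial.C_mul, pow_add]
    ring
  have key := congrArg (Polynomial.coeff · w) (hFsum.symm.trans hFG)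
  simp only [Polynomial.finset_sum_coeff] at key
  rw [Polynomial.coeff_C_mul, Polynomial.coeff_X_pow, if_pos rfl, mul_one] at key
  rw [← key]
  refine Finset.sum_congr rfl fun d _ => ?_
  rw [Polynomial.coeff_C_mul, Polynomial.coeff_X_pow]
  by_cases hw : m * d 0 + n * d 1 = w
  · rw [if_pos hw, if_pos hw.symm, mul_one]
  · rw [if_neg hw, if_neg (fun hc => hw hc.symm), mul_zero]


lemma sum_weight_m (m n : ℕ) (hm : 0 < m) (hmn : m < n) (P : MvPolynomial (Fin 2) ℂ)
    (x y : ℂ) :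
    (∑ d ∈ P.support, if m * d 0 + n * d 1 = m
        then MvPolynomial.coeff d P * x ^ d 0 * y ^ d 1 else 0)
      = MvPolynomial.coeff (Finsupp.single 0 1) P * x := by
  have step : ∀ d : Fin 2 →₀ ℕ,
      (if m * d 0 + n * d 1 = m then MvPolynomial.coeff d P * x ^ d 0 * y ^ d 1 else 0)
      = if d = Finsupp.single 0 1 then MvPolynomial.coeff (Finsupp.single 0 1) P * x else 0 := by
    intro d
    by_cases hd : d = Finsupp.single 0 1
    · subst hd
      rw [if_pos rfl, if_pos] <;> simp [Finsupp.single_apply]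
    · rw [if_neg hd]
      by_cases hc : m * d 0 + n * d 1 = m
      · exfalso
        have h1 : d 1 = 0 := by
          by_contra h
          have h2 : 1 ≤ d 1 := Nat.one_le_iff_ne_zero.mpr h
          nlinarith
        have h0 : d 0 = 1 := by
          rw [h1, mul_zero, add_zero] at hc
          exact Nat.eq_of_mul_eq_mul_left hm (by omega)
        exact hd (Finsupp.ext fun i => by
          fin_cases i <;> simp [Finsupp.single_apply, h0, h1])
      · rw [if_neg hc]
  rw [Finset.sum_congr rfl fun d _ => step d, Finset.sum_ite_eq' P.support]
  by_cases hmem : (Finsupp.single 0 1 : Fin 2 →₀ ℕ) ∈ P.support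
  · rw [if_pos hmem]
  · rw [if_neg hmem, MvPolynomial.notMem_support_iff.mp hmem, zero_mul]

lemma sum_weight_n (m k : ℕ) (hm : 0 < m) (hk : 2 ≤ k) (Q : MvPolynomial (Fin 2) ℂ)
    (x y : ℂ) :
    (∑ d ∈ Q.support, if m * d 0 + (m * k) * d 1 = m * k
        then MvPolynomial.coeff d Q * x ^ d 0 * y ^ d 1 else 0)
      = MvPolynomial.coeff (Finsupp.single 1 1) Q * y
        + MvPolynomial.coeff (Finsupp.single 0 k) Q * x ^ k := by
  have hAB : (Finsupp.single 1 1 : Fin 2 →₀ ℕ) ≠ Finsupp.single 0 k := by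
    intro h
    have := congrArg (fun d : Fin 2 →₀ ℕ => d 1) h
    simp [Finsupp.single_apply] at this
  have step : ∀ d : Fin 2 →₀ ℕ,
      (if m * d 0 + (m * k) * d 1 = m * k then MvPolynomial.coeff d Q * x ^ d 0 * y ^ d 1 else 0)
      = (if d = Finsupp.single 1 1 then MvPolynomial.coeff (Finsupp.single 1 1) Q * y else 0)
        + (if d = Finsupp.single 0 k then MvPolynomial.coeff (Finsupp.single 0 k) Q * x ^ k else 0) := by
    intro d
    by_cases hA : d = Finsupp.single 1 1
    · subst hA
      rw [if_pos rfl, if_neg hAB, add_zero, if_pos] <;> simp [Finsupp.single_apply]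
    · by_cases hB : d = Finsupp.single 0 k
      · subst hB
        rw [if_neg hA, zero_add, if_pos rfl, if_pos] <;> simp [Finsupp.single_apply]
      · rw [if_neg hA, if_neg hB, add_zero]
        by_cases hc : m * d 0 + (m * k) * d 1 = m * k
        · exfalso
          have hmk : 0 < m * k := Nat.mul_pos hm (by omega)
          have h1 : d 1 ≤ 1 := by
            by_contra hgt
            push_neg at hgt
            have : m * k * 2 ≤ m * k * d 1 := Nat.mul_le_mul_left _ hgt
            nlinarith
          interval_cases h : d 1
          · have h0 : d 0 = k := by
              rw [mul_zero, add_zero] at hc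
              exact Nat.eq_of_mul_eq_mul_left hm hc
            exact hB (Finsupp.ext fun i => by
              fin_cases i <;> simp [Finsupp.single_apply, h0, h])
          · have hmd : m * d 0 = 0 := by
              rw [mul_one] at hc
              omega
            have h0 : d 0 = 0 := by
              rcases Nat.mul_eq_zero.mp hmd with h' | h'
              · omega
              · exact h'
            exact hA (Finsupp.ext fun i => by
              fin_cases i <;> simp [Finsupp.single_apply, h0, h])
        · rw [if_neg hc]
  rw [Finset.sum_congr rfl fun d _ => step d, Finset.sum_add_distrib,
    Finset.sum_ite_eq' Q.support, Finset.sum_ite_eq' Q.support]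
  congr 1
  · by_cases hmem : (Finsupp.single 1 1 : Fin 2 →₀ ℕ) ∈ Q.support
    · rw [if_pos hmem]
    · rw [if_neg hmem, MvPolynomial.notMem_support_iff.mp hmem, zero_mul]
  · by_cases hmem : (Finsupp.single 0 k : Fin 2 →₀ ℕ) ∈ Q.support
    · rw [if_pos hmem]
    · rw [if_neg hmem, MvPolynomial.notMem_support_iff.mp hmem, zero_mul]

/-- Let `m | n`, `m < n`, be positive integers and let `ℂ*` act on `ℂ² \ {0}` with weights
`(m, n)`. Then every `ℂ*`-equivariant algebraic automorphism of `ℂ² \ {0}` has the form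
`(x, y) ↦ (λ₁ x, λ₂ y + a x^(n/m))` with `λ₁, λ₂ ∈ ℂ*`, `a ∈ ℂ`; moreover composition of
two such maps obeys the semidirect product law of `(ℂ* × ℂ*) ⋉ ℂ`: the composite of the
maps with parameters `(λ₁, λ₂, a)` and `(λ₁', λ₂', a')` has parameters
`(λ₁λ₁', λ₂λ₂', λ₂ a' + λ₁'^(n/m) a)`. -/
theorem equivariant_automorphism_is_triangular
    (m n : ℕ) (hm : 0 < m) (hmn : m < n) (hdvd : m ∣ n)
    (f : PuncturedPlane ≃ PuncturedPlane)
    (hpoly : ∃ P Q : MvPolynomial (Fin 2) ℂ, ∀ v : PuncturedPlane,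
      ((f v : ℂ × ℂ)) =
        (MvPolynomial.eval ![(v : ℂ × ℂ).1, (v : ℂ × ℂ).2] P,
         MvPolynomial.eval ![(v : ℂ × ℂ).1, (v : ℂ × ℂ).2] Q))
    (hpoly' : ∃ P Q : MvPolynomial (Fin 2) ℂ, ∀ v : PuncturedPlane,
      ((f.symm v : ℂ × ℂ)) =
        (MvPolynomial.eval ![(v : ℂ × ℂ).1, (v : ℂ × ℂ).2] P,
         MvPolynomial.eval ![(v : ℂ × ℂ).1, (v : ℂ × ℂ).2] Q))
    (hequiv : ∀ (t : ℂˣ) (v w : PuncturedPlane),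
      (w : ℂ × ℂ) = ((t : ℂ) ^ m * (v : ℂ × ℂ).1, (t : ℂ) ^ n * (v : ℂ × ℂ).2) →
      (f w : ℂ × ℂ) = ((t : ℂ) ^ m * (f v : ℂ × ℂ).1, (t : ℂ) ^ n * (f v : ℂ × ℂ).2)) :
    (∃ (l₁ l₂ : ℂˣ) (a : ℂ), ∀ v : PuncturedPlane,
      (f v : ℂ × ℂ) =
        ((l₁ : ℂ) * (v : ℂ × ℂ).1,
         (l₂ : ℂ) * (v : ℂ × ℂ).2 + a * (v : ℂ × ℂ).1 ^ (n / m))) ∧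
    (∀ (l₁ l₂ l₁' l₂' : ℂˣ) (a a' x y : ℂ),
      ((l₁ : ℂ) * ((l₁' : ℂ) * x),
       (l₂ : ℂ) * ((l₂' : ℂ) * y + a' * x ^ (n / m)) + a * ((l₁' : ℂ) * x) ^ (n / m)) =
      (((l₁ : ℂ) * (l₁' : ℂ)) * x,
       ((l₂ : ℂ) * (l₂' : ℂ)) * y +
         ((l₂ : ℂ) * a' + (l₁' : ℂ) ^ (n / m) * a) * x ^ (n / m))) := by
  constructor
  · -- main part
    obtain ⟨k, hk⟩ := hdvd
    have hk2 : 2 ≤ k := by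
      rcases Nat.lt_or_ge k 2 with h | h
      · interval_cases k <;> omega
      · exact h
    have hnm : n / m = k := by rw [hk, Nat.mul_div_cancel_left _ hm]
    obtain ⟨P, Q, hPQ⟩ := hpoly
    -- the scaling identities
    have hscale : ∀ v : PuncturedPlane, ∀ t : ℂ, t ≠ 0 →
        (MvPolynomial.eval ![t ^ m * (v : ℂ × ℂ).1, t ^ n * (v : ℂ × ℂ).2] P
          = t ^ m * MvPolynomial.eval ![(v : ℂ × ℂ).1, (v : ℂ × ℂ).2] P)
        ∧ (MvPolynomial.eval ![t ^ m * (v : ℂ × ℂ).1, t ^ n * (v : ℂ × ℂ).2] Q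
          = t ^ n * MvPolynomial.eval ![(v : ℂ × ℂ).1, (v : ℂ × ℂ).2] Q) := by
      intro v t ht
      have hwne : ((t ^ m * (v : ℂ × ℂ).1, t ^ n * (v : ℂ × ℂ).2) : ℂ × ℂ) ≠ 0 := by
        intro hzero
        rw [Prod.ext_iff] at hzero
        simp only [Prod.fst_zero, Prod.snd_zero, mul_eq_zero, pow_eq_zero_iff'] at hzero
        apply v.2
        rw [Prod.ext_iff]
        constructor
        · rcases hzero.1 with h | h
          · exact absurd h.1 ht
          · exact h
        · rcases hzero.2 with h | h
          · exact absurd h.1 ht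
          · exact h
      set w : PuncturedPlane := ⟨(t ^ m * (v : ℂ × ℂ).1, t ^ n * (v : ℂ × ℂ).2), hwne⟩ with hw
      have heq := hequiv (Units.mk0 t ht) v w rfl
      have h1 := hPQ w
      have h2 := hPQ v
      rw [heq, h2] at h1
      simp only [hw] at h1 ⊢
      rw [Prod.ext_iff] at h1
      exact ⟨h1.1.symm, h1.2.symm⟩
    -- evaluate via the sums
    have hPval : ∀ v : PuncturedPlane,
        MvPolynomial.eval ![(v : ℂ × ℂ).1, (v : ℂ × ℂ).2] P
          = MvPolynomial.coeff (Finsupp.single 0 1) P * (v : ℂ × ℂ).1 := by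
      intro v
      rw [eval_weight_aux m n m P _ _ (fun t ht => (hscale v t ht).1),
        sum_weight_m m n hm hmn]
    have hQval : ∀ v : PuncturedPlane,
        MvPolynomial.eval ![(v : ℂ × ℂ).1, (v : ℂ × ℂ).2] Q
          = MvPolynomial.coeff (Finsupp.single 1 1) Q * (v : ℂ × ℂ).2
            + MvPolynomial.coeff (Finsupp.single 0 k) Q * (v : ℂ × ℂ).1 ^ k := by
      intro v
      have := eval_weight_aux m n n Q _ _ (fun t ht => (hscale v t ht).2)
      rw [this, hk, sum_weight_n m k hm hk2]
    set lam1 := MvPolynomial.coeff (Finsupp.single 0 1) P with hlam1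
    set lam2 := MvPolynomial.coeff (Finsupp.single 1 1) Q with hlam2
    set a := MvPolynomial.coeff (Finsupp.single 0 k) Q with ha
    have hform : ∀ v : PuncturedPlane, (f v : ℂ × ℂ)
        = (lam1 * (v : ℂ × ℂ).1, lam2 * (v : ℂ × ℂ).2 + a * (v : ℂ × ℂ).1 ^ k) := by
      intro v
      rw [hPQ v, hPval v, hQval v]
    have hkpos : 0 < k := by omega
    -- lam2 ≠ 0
    have hv0 : ((0, 1) : ℂ × ℂ) ≠ 0 := by
      intro h; rw [Prod.ext_iff] at h; simpa using h.2
    have hlam2ne : lam2 ≠ 0 := by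
      intro h0
      have := hform ⟨(0, 1), hv0⟩
      simp only [zero_pow hkpos.ne', mul_zero, mul_one, h0, zero_mul, add_zero] at this
      exact (f ⟨(0, 1), hv0⟩).2 (by rw [this]; rfl)
    -- lam1 ≠ 0
    have hlam1ne : lam1 ≠ 0 := by
      intro h0
      have hv1 : ((1, 0) : ℂ × ℂ) ≠ 0 := by
        intro h; rw [Prod.ext_iff] at h; simpa using h.1
      have hf1 := hform ⟨(1, 0), hv1⟩
      simp only [h0, zero_mul, mul_zero, one_pow, mul_one, zero_add] at hf1
      have hane : a ≠ 0 := by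
        intro h
        exact (f ⟨(1, 0), hv1⟩).2 (by rw [hf1, h]; rfl)
      have hane' : a / lam2 ≠ 0 := div_ne_zero hane hlam2ne
      have hv2 : ((0, a / lam2) : ℂ × ℂ) ≠ 0 := by
        intro h; rw [Prod.ext_iff] at h; exact hane' h.2
      have hf2 := hform ⟨(0, a / lam2), hv2⟩
      simp only [h0, zero_mul, zero_pow hkpos.ne', mul_zero, add_zero] at hf2
      rw [mul_div_cancel₀ a hlam2ne] at hf2
      have : f ⟨(1, 0), hv1⟩ = f ⟨(0, a / lam2), hv2⟩ := by
        apply Subtype.ext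
        rw [hf1, hf2]
      have := f.injective this
      rw [Subtype.ext_iff, Prod.ext_iff] at this
      simpa using this.1
    refine ⟨Units.mk0 lam1 hlam1ne, Units.mk0 lam2 hlam2ne, a, ?_⟩
    intro v
    rw [hform v, hnm]
    rfl
  · intro l₁ l₂ l₁' l₂' a a' x y
    rw [Prod.mk.injEq]
    constructor
    · ring
    · rw [mul_pow]; ring
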